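/- Let Δ be a matroid on ground set [n] such that [d] is a basis, with bases ordered lexicographically with respect to the natural order on [n]. If I is an independent set of Δ with I ∩ [d] = ∅, then there exists a basis B of Δ whose restriction set R(B) (the minimal subset of B not contained in any lexicographically earlier basis) equals I. -/

import Mathlib

/-- A matroid independence system on ground set `Finset.range n`. -/
def IsMatroidOn (n : ℕ) (Indep : Finset ℕ → Prop) : Prop :=
  Indep ∅ ∧
  (∀ I, Indep I → I ⊆ Finset.range n) ∧
  (∀ I J, I ⊆ J → Indep J → Indep I) ∧
  (∀ I J, Indep I → Indep J → I.card < J.card → ∃ v ∈ J \ I, Indep (insert v I))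

/-- `B` is a basis: a maximal independent set. -/
def IsBasisOf (Indep : Finset ℕ → Prop) (B : Finset ℕ) : Prop :=
  Indep B ∧ ∀ C, Indep C → B ⊆ C → C = B

/-- Lexicographic order on finite subsets of ℕ: the smallest element where the
two sets differ belongs to the smaller set. -/
def lexLt (A B : Finset ℕ) : Prop :=
  ∃ m, m ∈ A ∧ m ∉ B ∧ ∀ k, k < m → (k ∈ A ↔ k ∈ B)

/-- Restriction set of a basis `B` in the lexicographic shelling:
`R(B) = {x ∈ B : (B \ {x}) ∪ {y} is a basis for some y < x}`. -/
noncomputable def restrSet (Indep : Finset ℕ → Prop) (B : Finset ℕ) : Finset ℕ :=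
  @Finset.filter _ (fun x => ∃ y, y < x ∧ IsBasisOf Indep (insert y (B.erase x)))
    (Classical.decPred _) B

/-- The finite set of bases of a matroid on ground set `Finset.range n`. -/
noncomputable def basesOf (Indep : Finset ℕ → Prop) (n : ℕ) : Finset (Finset ℕ) :=
  @Finset.filter _ (IsBasisOf Indep) (Classical.decPred _) (Finset.range n).powerset

/-- The number of bases. -/
noncomputable def numBases (Indep : Finset ℕ → Prop) (n : ℕ) : ℕ := (basesOf Indep n).card

/-- The `i`-th entry of the h-vector: the number of bases whose restriction set
in the lexicographic shelling has cardinality `i`. -/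
noncomputable def hVec (Indep : Finset ℕ → Prop) (n i : ℕ) : ℕ :=
  (@Finset.filter _ (fun B => (restrSet Indep B).card = i) (Classical.decPred _)
    (basesOf Indep n)).card

/-- The independence predicate of the matroid `Γ_I` on ground set `Finset.range d`:
`G` is independent iff `G ⊆ [d]` and `G ∪ I` is independent in the ambient matroid. -/
def GammaIndep (Indep : Finset ℕ → Prop) (d : ℕ) (I : Finset ℕ) : Finset ℕ → Prop :=
  fun G => G ⊆ Finset.range d ∧ Indep (G ∪ I)

lemma sum_pow_lt (k : ℕ) : ∑ i ∈ Finset.range k, 2^i < 2^k := by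
  induction k with
  | zero => simp
  | succ k ih =>
    rw [Finset.sum_range_succ]
    have h2 : 2^(k+1) = 2^k + 2^k := by ring
    omega

lemma tail_lt (n m : ℕ) (B : Finset ℕ) (hBn : ∀ k ∈ B, k < n) (hmn : m < n) :
    ∑ k ∈ B.filter (fun k => m < k), 2^(n-1-k) < 2^(n-1-m) := by
  classical
  set S := B.filter (fun k => m < k) with hS
  have h1 : ∑ i ∈ S.image (fun k => n-1-k), 2^i = ∑ k ∈ S, 2^(n-1-k) := by
    apply Finset.sum_image
    intro a ha b hb hab
    have ha' := hBn a (Finset.mem_filter.1 ha).1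
    have hb' := hBn b (Finset.mem_filter.1 hb).1
    simp only at hab
    omega
  have h2 : S.image (fun k => n-1-k) ⊆ Finset.range (n-1-m) := by
    intro i hi
    obtain ⟨k, hk, rfl⟩ := Finset.mem_image.1 hi
    have hk1 := hBn k (Finset.mem_filter.1 hk).1
    have hk2 := (Finset.mem_filter.1 hk).2
    simp only [Finset.mem_range]
    omega
  calc ∑ k ∈ S, 2^(n-1-k) = ∑ i ∈ S.image (fun k => n-1-k), 2^i := h1.symm
    _ ≤ ∑ i ∈ Finset.range (n-1-m), 2^i := Finset.sum_le_sum_of_subset h2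
    _ < 2^(n-1-m) := sum_pow_lt _

lemma w_lt (n : ℕ) (A B : Finset ℕ) (hA : A ⊆ Finset.range n) (hBn : B ⊆ Finset.range n)
    (h : lexLt A B) : ∑ k ∈ B, 2^(n-1-k) < ∑ k ∈ A, 2^(n-1-k) := by
  classical
  obtain ⟨m, hmA, hmB, hagree⟩ := h
  have hmn : m < n := Finset.mem_range.1 (hA hmA)
  have hsplit : ∀ X : Finset ℕ, ∑ k ∈ X, 2^(n-1-k) =
      ∑ k ∈ X.filter (fun k => k < m), 2^(n-1-k)
      + ∑ k ∈ X.filter (fun k => ¬ k < m), 2^(n-1-k) :=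
    fun X => (Finset.sum_filter_add_sum_filter_not X _ _).symm
  have hlow : A.filter (fun k => k < m) = B.filter (fun k => k < m) := by
    ext k; simp only [Finset.mem_filter]
    constructor
    · rintro ⟨hk, hkm⟩; exact ⟨(hagree k hkm).1 hk, hkm⟩
    · rintro ⟨hk, hkm⟩; exact ⟨(hagree k hkm).2 hk, hkm⟩
  have hBfil : B.filter (fun k => ¬ k < m) = B.filter (fun k => m < k) := by
    ext k; simp only [Finset.mem_filter]
    constructor
    · rintro ⟨hk, h1⟩
      have : k ≠ m := fun e => hmB (e ▸ hk)
      exact ⟨hk, by omega⟩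
    · rintro ⟨hk, h1⟩; exact ⟨hk, by omega⟩
  have hhighB : ∑ k ∈ B.filter (fun k => ¬ k < m), 2^(n-1-k) < 2^(n-1-m) := by
    rw [hBfil]
    exact tail_lt n m B (fun k hk => Finset.mem_range.1 (hBn hk)) hmn
  have hhighA : 2^(n-1-m) ≤ ∑ k ∈ A.filter (fun k => ¬ k < m), 2^(n-1-k) := by
    apply Finset.single_le_sum (f := fun k => 2^(n-1-k)) (fun i _ => Nat.zero_le _)
    simp only [Finset.mem_filter]
    exact ⟨hmA, by omega⟩
  rw [hsplit A, hsplit B, hlow]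
  exact Nat.add_lt_add_left (lt_of_lt_of_le hhighB hhighA) _

theorem stmt_0 (n d : ℕ) (Indep : Finset ℕ → Prop)
    (hM : IsMatroidOn n Indep) (hB : IsBasisOf Indep (Finset.range d))
    (I : Finset ℕ) (hI : Indep I) (hdisj : Disjoint I (Finset.range d)) :
    ∃ B, IsBasisOf Indep B ∧ restrSet Indep B = I := by
  classical
  obtain ⟨hemp, hsub, hdown, hexch⟩ := hM
  -- every independent set has card ≤ d
  have hcard_le : ∀ C, Indep C → C.card ≤ d := by
    intro C hC
    by_contra h
    push_neg at h
    have hlt : (Finset.range d).card < C.card := by simpa using h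
    obtain ⟨v, hv, hvi⟩ := hexch _ _ hB.1 hC hlt
    have heq := hB.2 _ hvi (Finset.subset_insert _ _)
    rw [Finset.mem_sdiff] at hv
    exact hv.2 (heq ▸ Finset.mem_insert_self v (Finset.range d))
  -- every basis has card d
  have hbasis_card : ∀ B, IsBasisOf Indep B → B.card = d := by
    intro B hBB
    have h1 := hcard_le B hBB.1
    by_contra h
    have hlt : B.card < (Finset.range d).card := by simp; omega
    obtain ⟨v, hv, hvi⟩ := hexch _ _ hBB.1 hB.1 hlt
    have heq := hBB.2 _ hvi (Finset.subset_insert _ _)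
    rw [Finset.mem_sdiff] at hv
    exact hv.2 (heq ▸ Finset.mem_insert_self v B)
  -- any independent set of card d is a basis
  have hfull : ∀ C, Indep C → C.card = d → IsBasisOf Indep C := by
    intro C hC hCd
    refine ⟨hC, fun D hD hCD => ?_⟩
    have := hcard_le D hD
    exact (Finset.eq_of_subset_of_card_le hCD (by omega)).symm
  -- extend any independent set to a basis
  have hext : ∀ k (C : Finset ℕ), Indep C → d - C.card = k →
      ∃ B, IsBasisOf Indep B ∧ C ⊆ B := by
    intro k
    induction k with
    | zero =>
      intro C hC h0
      have := hcard_le C hC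
      exact ⟨C, hfull C hC (by omega), Finset.Subset.refl _⟩
    | succ k ih =>
      intro C hC hk
      have hlt : C.card < (Finset.range d).card := by
        simp only [Finset.card_range]; omega
      obtain ⟨v, hv, hvi⟩ := hexch _ _ hC hB.1 hlt
      have hvC : v ∉ C := (Finset.mem_sdiff.1 hv).2
      obtain ⟨B, hB', hCB⟩ := ih (insert v C) hvi
        (by rw [Finset.card_insert_of_notMem hvC]; omega)
      exact ⟨B, hB', (Finset.subset_insert _ _).trans hCB⟩
  -- candidate bases: bases containing I
  set T : Finset (Finset ℕ) :=
    Finset.filter (fun B => IsBasisOf Indep B ∧ I ⊆ B) (Finset.range n).powerset with hT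
  have hTne : T.Nonempty := by
    obtain ⟨B0, hB0, hIB0⟩ := hext (d - I.card) I hI rfl
    exact ⟨B0, Finset.mem_filter.2 ⟨Finset.mem_powerset.2 (hsub _ hB0.1), hB0, hIB0⟩⟩
  obtain ⟨B, hBT, hmax⟩ := T.exists_max_image (fun X => ∑ k ∈ X, 2^(n-1-k)) hTne
  rw [hT, Finset.mem_filter, Finset.mem_powerset] at hBT
  obtain ⟨hBn, hBbasis, hIB⟩ := hBT
  have hBd : B.card = d := hbasis_card B hBbasis
  refine ⟨B, hBbasis, ?_⟩
  apply Finset.Subset.antisymm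
  · -- restrSet ⊆ I
    intro x hx
    simp only [restrSet, Finset.mem_filter] at hx
    obtain ⟨hxB, y, hyx, hy⟩ := hx
    by_contra hxI
    have hyB : y ∉ B := by
      intro hyBmem
      have hyE : y ∈ B.erase x := Finset.mem_erase.2 ⟨by omega, hyBmem⟩
      rw [Finset.insert_eq_self.2 hyE] at hy
      have := hbasis_card _ hy
      rw [Finset.card_erase_of_mem hxB] at this
      have hd1 : 1 ≤ B.card := Finset.card_pos.2 ⟨x, hxB⟩
      omega
    set B' := insert y (B.erase x) with hB'
    have hIB' : I ⊆ B' := by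
      intro z hz
      have hzB := hIB hz
      have hzx : z ≠ x := fun e => hxI (e ▸ hz)
      exact Finset.mem_insert_of_mem (Finset.mem_erase.2 ⟨hzx, hzB⟩)
    have hB'T : B' ∈ T := by
      rw [hT, Finset.mem_filter, Finset.mem_powerset]
      exact ⟨hsub _ hy.1, hy, hIB'⟩
    have hlex : lexLt B' B := by
      refine ⟨y, Finset.mem_insert_self _ _, hyB, fun k hk => ?_⟩
      simp only [hB', Finset.mem_insert, Finset.mem_erase]
      constructor
      · rintro (rfl | ⟨-, hkB⟩)
        · omega
        · exact hkB
      · intro hkB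
        exact Or.inr ⟨by omega, hkB⟩
    have := w_lt n B' B (hsub _ hy.1) hBn hlex
    have := hmax B' hB'T
    omega
  · -- I ⊆ restrSet
    intro x hxI
    have hxB : x ∈ B := hIB hxI
    have hxd : d ≤ x := by
      by_contra h
      exact absurd (Finset.mem_range.2 (by omega)) (Finset.disjoint_left.1 hdisj hxI)
    have herase : Indep (B.erase x) := hdown _ _ (Finset.erase_subset _ _) hBbasis.1
    have hec : (B.erase x).card = d - 1 := by
      rw [Finset.card_erase_of_mem hxB, hBd]
    have hd1 : 1 ≤ d := by
      have : 1 ≤ B.card := Finset.card_pos.2 ⟨x, hxB⟩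
      omega
    have hlt : (B.erase x).card < (Finset.range d).card := by
      simp only [Finset.card_range]; omega
    obtain ⟨y, hy, hyi⟩ := hexch _ _ herase hB.1 hlt
    rw [Finset.mem_sdiff, Finset.mem_range] at hy
    have hcard : (insert y (B.erase x)).card = d := by
      rw [Finset.card_insert_of_notMem hy.2, hec]; omega
    simp only [restrSet, Finset.mem_filter]
    exact ⟨hxB, y, by omega, hfull _ hyi hcard⟩
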